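/- Let (X, x) be a well-pointed path-connected space, let P_y^x(X) be the space of paths from y to x in X, and P_y(X) the space of paths starting at y. Then the homotopy fiber over y of the retraction X ∨_x S^n → X (collapsing S^n) is homotopy equivalent to P_y(X) ∪_{P_y^x(X)} (P_y^x(X) × S^n), and this space is naturally homotopy equivalent to the half-smash Σ^n (P_y^x(X)₊) = (P_y^x(X)₊) ∧ S^n. Consequently the Goodwillie derivative of the identity functor at (X, x, y) is stably equivalent to the suspension spectrum Σ^∞ P_y^x(X)₊; for x = y this is Σ^∞ ΩX₊. -/

import Mathlib

open ContinuousMap CategoryTheory TopCat.RelativeCWComplex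

noncomputable section

/-- The homotopy fiber of a map `f : A → B` over a point `b : B`. -/
def HoFib {A B : Type} [TopologicalSpace A] [TopologicalSpace B] (f : C(A, B)) (b : B) :
    Type :=
  {p : A × C(unitInterval, B) // p.2 0 = b ∧ p.2 1 = f p.1}

instance {A B : Type} [TopologicalSpace A] [TopologicalSpace B] (f : C(A, B)) (b : B) :
    TopologicalSpace (HoFib f b) :=
  inferInstanceAs (TopologicalSpace {p : A × C(unitInterval, B) // p.2 0 = b ∧ p.2 1 = f p.1})

/-- The `n`-sphere. -/
def SphereN (n : ℕ) : Type :=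
  Metric.sphere (0 : EuclideanSpace ℝ (Fin (n + 1))) 1

instance (n : ℕ) : TopologicalSpace (SphereN n) :=
  inferInstanceAs (TopologicalSpace (Metric.sphere _ _))

/-- The basepoint of the `n`-sphere. -/
def SphereN.pt (n : ℕ) : SphereN n :=
  ⟨EuclideanSpace.single 0 1, by simp⟩

/-- The relation collapsing the basepoints in a binary sum. -/
def Wedge2Rel {A B : Type} (a0 : A) (b0 : B) : (A ⊕ B) → (A ⊕ B) → Prop :=
  fun p q => p = q ∨
    ((p = Sum.inl a0 ∨ p = Sum.inr b0) ∧ (q = Sum.inl a0 ∨ q = Sum.inr b0))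

/-- The wedge (one-point union) of two pointed spaces. -/
def Wedge2 {A B : Type} [TopologicalSpace A] [TopologicalSpace B] (a0 : A) (b0 : B) :
    Type :=
  Quot (Wedge2Rel a0 b0)

instance {A B : Type} [TopologicalSpace A] [TopologicalSpace B] (a0 : A) (b0 : B) :
    TopologicalSpace (Wedge2 a0 b0) :=
  inferInstanceAs (TopologicalSpace (Quot _))

/-- The wedge `X ∨ₓ Sⁿ` of a pointed space with the `n`-sphere. -/
def WedgeSphere (X : Type) [TopologicalSpace X] (x : X) (n : ℕ) : Type :=
  Wedge2 x (SphereN.pt n)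

instance (X : Type) [TopologicalSpace X] (x : X) (n : ℕ) :
    TopologicalSpace (WedgeSphere X x n) :=
  inferInstanceAs (TopologicalSpace (Wedge2 _ _))

/-- The retraction `X ∨ₓ Sⁿ → X` collapsing the sphere to the basepoint. -/
def wedgeSphereRetr (X : Type) [TopologicalSpace X] (x : X) (n : ℕ) :
    C(WedgeSphere X x n, X) where
  toFun := Quot.lift (Sum.elim id fun _ => x) (by
    rintro p q (rfl | ⟨hp | hp, hq | hq⟩) <;> subst_vars <;> rfl)
  continuous_toFun := continuous_quot_lift _ (continuous_id.sumElim continuous_const)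

/-- The based loop space of a pointed space. -/
def LoopSp (X : Type) [TopologicalSpace X] (x : X) : Type :=
  {γ : C(unitInterval, X) // γ 0 = x ∧ γ 1 = x}

instance (X : Type) [TopologicalSpace X] (x : X) : TopologicalSpace (LoopSp X x) :=
  inferInstanceAs (TopologicalSpace {γ : C(unitInterval, X) // γ 0 = x ∧ γ 1 = x})

/-- The half-smash `Σⁿ (Z₊) = (Z × Sⁿ)/(Z × pt)`. -/
def HalfSmash (Z : Type) [TopologicalSpace Z] (n : ℕ) : Type :=
  Quot (fun p q : Z × SphereN n => p = q ∨ (p.2 = SphereN.pt n ∧ q.2 = SphereN.pt n))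

instance (Z : Type) [TopologicalSpace Z] (n : ℕ) : TopologicalSpace (HalfSmash Z n) :=
  inferInstanceAs (TopologicalSpace (Quot _))

/-- The basepoint `x` of `X` is nondegenerate (the inclusion `{x} → X` is a cofibration):
homotopy extension holds for the pair `(X, {x})`. -/
def NondegBasepoint (X : Type) [TopologicalSpace X] (x : X) : Prop :=
  ∀ (Z : Type) (_ : TopologicalSpace Z) (f : C(X, Z)) (h : C(unitInterval, Z)),
    h 0 = f x → ∃ H : C(X × unitInterval, Z), (∀ w, H (w, 0) = f w) ∧ ∀ t, H (x, t) = h t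

/-- The space of paths in `X` starting at `y`. -/
def PathsFrom (X : Type) [TopologicalSpace X] (y : X) : Type :=
  {γ : C(unitInterval, X) // γ 0 = y}

instance (X : Type) [TopologicalSpace X] (y : X) : TopologicalSpace (PathsFrom X y) :=
  inferInstanceAs (TopologicalSpace {γ : C(unitInterval, X) // γ 0 = y})

/-- The space of paths in `X` from `y` to `x`. -/
def PathsFromTo (X : Type) [TopologicalSpace X] (y x : X) : Type :=
  {γ : C(unitInterval, X) // γ 0 = y ∧ γ 1 = x}

instance (X : Type) [TopologicalSpace X] (y x : X) :
    TopologicalSpace (PathsFromTo X y x) :=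
  inferInstanceAs (TopologicalSpace {γ : C(unitInterval, X) // γ 0 = y ∧ γ 1 = x})

/-- The adjunction space `P_y(X) ∪_{P_y^x(X)} (P_y^x(X) × Sⁿ)`, gluing `(γ, basepoint)`
to `γ`. -/
def PathsGlue (X : Type) [TopologicalSpace X] (y x : X) (n : ℕ) : Type :=
  Quot (fun p q : PathsFrom X y ⊕ (PathsFromTo X y x × SphereN n) =>
    p = q ∨ ∃ γ : PathsFromTo X y x,
      p = Sum.inr (γ, SphereN.pt n) ∧ q = Sum.inl ⟨γ.1, γ.2.1⟩)

instance (X : Type) [TopologicalSpace X] (y x : X) (n : ℕ) :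
    TopologicalSpace (PathsGlue X y x n) :=
  inferInstanceAs (TopologicalSpace (Quot _))


namespace IdDerivAux
open Set unitInterval


-- locally compact instance check
example : LocallyCompactSpace unitInterval := inferInstance
example : T1Space unitInterval := inferInstance

def proj01 : ℝ → unitInterval := projIcc 0 1 zero_le_one

lemma proj01_cont : Continuous proj01 := continuous_projIcc

@[simp] lemma proj01_zero : proj01 0 = 0 := by simp [proj01]
@[simp] lemma proj01_one : proj01 1 = 1 := by simp [proj01]
@[simp] lemma proj01_coe (t : unitInterval) : proj01 (t : ℝ) = t := by
  simp [proj01, projIcc_val]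

structure NDR (X : Type) [TopologicalSpace X] (x : X) where
  rho : X → unitInterval → X
  tau : X → unitInterval → unitInterval
  cont_rho : Continuous fun p : X × unitInterval => rho p.1 p.2
  cont_tau : Continuous fun p : X × unitInterval => tau p.1 p.2
  rho_zero : ∀ w, rho w 0 = w
  rho_x : ∀ t, rho x t = x
  tau_x : ∀ t, tau x t = t
  halo : ∀ w t, tau w t ≠ 0 → rho w t = x


lemma ndr_of_nondeg {X : Type} [TopologicalSpace X] {x : X} (hwp : NondegBasepoint X x) :
    Nonempty (NDR X x) := by
  classical
  set Z := {z : X × unitInterval // z.2 = 0 ∨ z.1 = x} with hZ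
  obtain ⟨H, h0, hx⟩ := hwp Z inferInstance
    ⟨fun w => ⟨(w, 0), Or.inl rfl⟩, by fun_prop⟩
    ⟨fun t => ⟨(x, t), Or.inr rfl⟩, by fun_prop⟩
    (Subtype.ext rfl)
  refine ⟨⟨fun w t => ((H (w, t)).1).1, fun w t => ((H (w, t)).1).2, ?_, ?_, ?_, ?_, ?_, ?_⟩⟩
  · exact (continuous_fst.comp (continuous_subtype_val.comp H.continuous)).congr fun p => by rfl
  · exact (continuous_snd.comp (continuous_subtype_val.comp H.continuous)).congr fun p => by rfl
  · intro w; exact congrArg (fun z => (z.1).1) (h0 w)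
  · intro t; exact congrArg (fun z => (z.1).1) (hx t)
  · intro t; exact congrArg (fun z => (z.1).2) (hx t)
  · intro w t h
    rcases (H (w, t)).2 with h' | h'
    · exact absurd h' h
    · exact h'
variable {X : Type} [TopologicalSpace X] {x : X}

/-- concatenation of `γ` with the track of the deformation `rho`, at squeeze parameter `u`;
at `u = 1` it is `γ` itself, at `u = 0` it is `γ` followed by the full track. -/
def Draw (d : NDR X x) (γ : C(unitInterval, X)) (u : unitInterval) (r : ℝ) : X :=
  if r * (2 - (u : ℝ)) ≤ 1 then γ (proj01 (r * (2 - (u : ℝ))))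
  else d.rho (γ 1) (proj01 (r * (2 - (u : ℝ)) - 1))

lemma continuous_Draw (d : NDR X x) :
    Continuous fun p : (C(unitInterval, X) × unitInterval) × ℝ =>
      Draw d p.1.1 p.1.2 p.2 := by
  apply Continuous.if_le
  · exact continuous_eval.comp <| (continuous_fst.comp continuous_fst).prodMk
      (proj01_cont.comp <| by fun_prop)
  · exact d.cont_rho.comp <| Continuous.prodMk
      (((continuous_eval_const 1).comp (continuous_fst.comp continuous_fst)))
      (proj01_cont.comp <| by fun_prop)
  · fun_prop
  · fun_prop
  · rintro ⟨⟨γ, u⟩, r⟩ (h : _ = (1:ℝ))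
    simp only [h, proj01_one, sub_self, proj01_zero, d.rho_zero]

def Dmap (d : NDR X x) (γ : C(unitInterval, X)) (u : unitInterval) : C(unitInterval, X) :=
  ⟨fun t => Draw d γ u t, (continuous_Draw d).comp (by fun_prop : Continuous fun t :
    unitInterval => ((γ, u), (t:ℝ)))⟩

lemma continuous_Dmap (d : NDR X x) :
    Continuous fun p : C(unitInterval, X) × unitInterval => Dmap d p.1 p.2 := by
  apply ContinuousMap.continuous_of_continuous_uncurry
  exact (continuous_Draw d).comp
    ((continuous_fst.prodMk (continuous_subtype_val.comp continuous_snd)))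

@[simp] lemma Dmap_apply_zero (d : NDR X x) (γ : C(unitInterval, X)) (u : unitInterval) :
    Dmap d γ u 0 = γ 0 := by
  have h1 : ((0:unitInterval) : ℝ) * (2 - (u:ℝ)) = 0 := by norm_num
  simp only [Dmap, ContinuousMap.coe_mk, Draw, h1]
  rw [if_pos (by norm_num)]
  simp

lemma Dmap_apply_one (d : NDR X x) (γ : C(unitInterval, X)) (u : unitInterval) :
    Dmap d γ u 1 = d.rho (γ 1) (proj01 (1 - (u : ℝ))) := by
  have h1 : ((1:unitInterval) : ℝ) * (2 - (u:ℝ)) = 2 - (u:ℝ) := by norm_num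
  simp only [Dmap, ContinuousMap.coe_mk, Draw, h1]
  by_cases h : (2 : ℝ) - (u:ℝ) ≤ 1
  · rw [if_pos h]
    have hu : (u : ℝ) = 1 := le_antisymm u.2.2 (by linarith)
    have : (2:ℝ) - (u:ℝ) = 1 := by rw [hu]; norm_num
    rw [this, hu]
    simp [d.rho_zero]
  · rw [if_neg h]
    ring_nf

lemma Dmap_one (d : NDR X x) (γ : C(unitInterval, X)) : Dmap d γ 1 = γ := by
  ext t
  have h1 : (t : ℝ) * (2 - ((1:unitInterval) : ℝ)) = (t : ℝ) := by norm_num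
  simp only [Dmap, ContinuousMap.coe_mk, Draw, h1]
  rw [if_pos t.2.2]
  simp

/-- `Dc d γ` is `γ''` : `γ` followed by the full deformation track of its endpoint. -/
def Dc (d : NDR X x) (γ : C(unitInterval, X)) : C(unitInterval, X) := Dmap d γ 0

@[simp] lemma Dc_zero (d : NDR X x) (γ : C(unitInterval, X)) : Dc d γ 0 = γ 0 :=
  Dmap_apply_zero d γ 0

lemma Dc_one (d : NDR X x) (γ : C(unitInterval, X)) : Dc d γ 1 = d.rho (γ 1) 1 := by
  rw [Dc, Dmap_apply_one]; norm_num

end IdDerivAux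

namespace SphAux
open Set unitInterval

variable {n : ℕ}

instance : MetricSpace (SphereN n) :=
  inferInstanceAs (MetricSpace (Metric.sphere _ _))

lemma norm_one (s : SphereN n) : ‖(s.1 : EuclideanSpace ℝ (Fin (n+1)))‖ = 1 := by
  have := s.2
  rwa [Metric.mem_sphere, dist_zero_right] at this

def phiS (s : SphereN n) : ℝ := inner (𝕜 := ℝ) s.1 (SphereN.pt n).1

@[fun_prop] lemma phiS_cont : Continuous (phiS (n := n)) :=
  (continuous_subtype_val.inner continuous_const)

lemma phiS_le_one (s : SphereN n) : phiS s ≤ 1 := by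
  have := real_inner_le_norm s.1 (SphereN.pt n).1
  rwa [norm_one s, norm_one (SphereN.pt n), one_mul] at this

lemma phiS_eq_one_iff {s : SphereN n} : phiS s = 1 ↔ s = SphereN.pt n := by
  rw [phiS, inner_eq_one_iff_of_norm_eq_one (norm_one s) (norm_one (SphereN.pt n))]
  exact ⟨fun h => Subtype.ext h, fun h => congrArg Subtype.val h⟩

lemma phiS_pt : phiS (SphereN.pt n) = 1 := phiS_eq_one_iff.mpr rfl

/-- the deformation parameter toward the basepoint -/
def mS (p : SphereN n × unitInterval) : ℝ :=
  max 0 (min 1 (((p.2 : ℝ) - (1 - phiS p.1)) / (1 - phiS p.1)))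

lemma mS_nonneg (p) : 0 ≤ mS (n := n) p := le_max_left _ _
lemma mS_le_one (p) : mS (n := n) p ≤ 1 := by
  rw [mS, max_le_iff]
  exact ⟨zero_le_one, le_trans (min_le_left _ _) le_rfl⟩

lemma phiS_pos_of_mS_pos {p : SphereN n × unitInterval} (h : 0 < mS p) : 0 < phiS p.1 := by
  by_cases h1 : phiS p.1 = 1
  · linarith
  have hlt : phiS p.1 < 1 := lt_of_le_of_ne (phiS_le_one _) h1
  have hd : (0:ℝ) < 1 - phiS p.1 := by linarith
  have hr : 0 < ((p.2 : ℝ) - (1 - phiS p.1)) / (1 - phiS p.1) := by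
    rcases lt_or_ge 0 (((p.2 : ℝ) - (1 - phiS p.1)) / (1 - phiS p.1)) with h' | h'
    · exact h'
    · exfalso
      have : mS p = 0 := by
        rw [mS, max_eq_left]
        exact le_trans (min_le_right _ _) h'
      rw [this] at h; exact lt_irrefl _ h
  have hnum : 0 < (p.2 : ℝ) - (1 - phiS p.1) := by
    by_contra h'
    push_neg at h'
    have := div_nonpos_of_nonpos_of_nonneg h' (le_of_lt hd)
    linarith
  have := p.2.2.2
  linarith

def vS (p : SphereN n × unitInterval) : EuclideanSpace ℝ (Fin (n+1)) :=
  (1 - mS p) • p.1.1 + mS p • (SphereN.pt n).1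

lemma inner_vS_pt (p : SphereN n × unitInterval) :
    inner (𝕜 := ℝ) (vS p) (SphereN.pt n).1 = (1 - mS p) * phiS p.1 + mS p := by
  rw [vS, inner_add_left, real_inner_smul_left, real_inner_smul_left]
  have : inner (𝕜 := ℝ) (SphereN.pt n).1 (SphereN.pt n).1 = (1:ℝ) := by
    rw [real_inner_self_eq_norm_sq, norm_one]; norm_num
  rw [this, mul_one]; rfl

lemma vS_ne_zero (p : SphereN n × unitInterval) : vS p ≠ 0 := by
  rcases eq_or_lt_of_le (mS_nonneg p) with h | h
  · rw [vS, ← h]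
    simp only [sub_zero, one_smul, zero_smul, add_zero]
    intro hc
    have := norm_one p.1
    rw [hc] at this; simp at this
  · intro hc
    have h2 := inner_vS_pt p
    rw [hc, inner_zero_left] at h2
    have h3 := phiS_pos_of_mS_pos h
    have h4 := mS_le_one p
    nlinarith

lemma norm_vS_le_one (p : SphereN n × unitInterval) : ‖vS p‖ ≤ 1 := by
  rw [vS]
  refine le_trans (norm_add_le _ _) ?_
  rw [norm_smul, norm_smul, norm_one, norm_one, mul_one, mul_one,
    Real.norm_eq_abs, Real.norm_eq_abs, abs_of_nonneg (by linarith [mS_le_one p]),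
    abs_of_nonneg (mS_nonneg p)]
  linarith

def sigmaS (p : SphereN n × unitInterval) : SphereN n :=
  ⟨‖vS p‖⁻¹ • vS p, by
    rw [Metric.mem_sphere, dist_zero_right]
    exact norm_smul_inv_norm (vS_ne_zero p)⟩

def tauS (p : SphereN n × unitInterval) : ℝ :=
  max 0 ((p.2 : ℝ) - 2 * (1 - phiS p.1))

@[fun_prop] lemma tauS_cont : Continuous (tauS (n := n)) := by
  unfold tauS
  fun_prop

lemma tauS_nonneg (p) : 0 ≤ tauS (n := n) p := le_max_left _ _
lemma tauS_le_one (p) : tauS (n := n) p ≤ 1 := by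
  rw [tauS, max_le_iff]
  refine ⟨zero_le_one, ?_⟩
  have h1 := phiS_le_one (p.1 : SphereN n)
  have := p.2.2.2
  linarith

lemma tauS_zero (s : SphereN n) : tauS (s, 0) = 0 := by
  rw [tauS, max_eq_left]
  have := phiS_le_one s
  simp only [Icc.coe_zero]
  linarith

lemma tauS_pt (u : unitInterval) : tauS (SphereN.pt n, u) = (u : ℝ) := by
  rw [tauS, phiS_pt]
  norm_num
  exact u.2.1

lemma mS_zero (s : SphereN n) : mS (s, 0) = 0 := by
  rw [mS, max_eq_left]
  by_cases h1 : phiS s = 1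
  · simp [h1]
  · have hlt : phiS s < 1 := lt_of_le_of_ne (phiS_le_one _) h1
    have hd : (0:ℝ) < 1 - phiS s := by linarith
    refine le_trans (min_le_right _ _) ?_
    apply div_nonpos_of_nonpos_of_nonneg _ (le_of_lt hd)
    simp only [Icc.coe_zero]
    linarith

lemma sigmaS_of_mS_zero {p : SphereN n × unitInterval} (h : mS p = 0) : sigmaS p = p.1 := by
  have hv : vS p = p.1.1 := by rw [vS, h]; simp
  apply Subtype.ext
  show ‖vS p‖⁻¹ • vS p = (p.1.1 : EuclideanSpace ℝ (Fin (n+1)))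
  rw [hv]
  simp [norm_one p.1]

lemma sigmaS_zero (s : SphereN n) : sigmaS (s, 0) = s := sigmaS_of_mS_zero (mS_zero s)

lemma mS_pt (u : unitInterval) : mS (SphereN.pt n, u) = 0 := by
  rw [mS, phiS_pt]
  simp

lemma sigmaS_pt (u : unitInterval) : sigmaS (SphereN.pt n, u) = SphereN.pt n :=
  sigmaS_of_mS_zero (mS_pt u)

lemma sigmaS_of_tauS_ne {p : SphereN n × unitInterval} (h : tauS p ≠ 0) :
    sigmaS p = SphereN.pt n := by
  have htau : 0 < (p.2 : ℝ) - 2 * (1 - phiS p.1) := by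
    rcases lt_or_ge 0 ((p.2 : ℝ) - 2 * (1 - phiS p.1)) with h' | h'
    · exact h'
    · exact absurd (max_eq_left h') h
  by_cases h1 : phiS p.1 = 1
  · have : p.1 = SphereN.pt n := phiS_eq_one_iff.mp h1
    rw [← this]
    exact sigmaS_of_mS_zero (by rw [show p = (p.1, p.2) from rfl, this]; exact mS_pt p.2)
  · have hlt : phiS p.1 < 1 := lt_of_le_of_ne (phiS_le_one _) h1
    have hd : (0:ℝ) < 1 - phiS p.1 := by linarith
    have hm : mS p = 1 := by
      rw [mS, min_eq_left, max_eq_right zero_le_one]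
      rw [le_div_iff₀ hd]
      linarith
    have hv : vS p = (SphereN.pt n).1 := by rw [vS, hm]; simp
    apply Subtype.ext
    show ‖vS p‖⁻¹ • vS p = ((SphereN.pt n).1 : EuclideanSpace ℝ (Fin (n+1)))
    rw [hv]
    simp [norm_one (SphereN.pt n)]

lemma phiS_sigmaS_ge (p : SphereN n × unitInterval) : phiS p.1 ≤ phiS (sigmaS p) := by
  rcases eq_or_lt_of_le (mS_nonneg p) with h | h
  · rw [sigmaS_of_mS_zero h.symm]
  · have hphi := phiS_pos_of_mS_pos h
    have hm1 := mS_le_one p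
    have hnum : phiS p.1 ≤ (1 - mS p) * phiS p.1 + mS p := by nlinarith [phiS_le_one p.1]
    have hnum0 : 0 < (1 - mS p) * phiS p.1 + mS p := by nlinarith
    have hn : 0 < ‖vS p‖ := norm_pos_iff.mpr (vS_ne_zero p)
    have hinv : 1 ≤ ‖vS p‖⁻¹ := by
      have hid : ‖vS p‖ * ‖vS p‖⁻¹ = 1 := mul_inv_cancel₀ (ne_of_gt hn)
      have hip : 0 < ‖vS p‖⁻¹ := inv_pos.mpr hn
      nlinarith [norm_vS_le_one p]
    have : phiS (sigmaS p) = ‖vS p‖⁻¹ * ((1 - mS p) * phiS p.1 + mS p) := by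
      rw [phiS, sigmaS]
      simp only
      rw [real_inner_smul_left, inner_vS_pt]
    rw [this]
    nlinarith

lemma dist_sq_eq (a b : SphereN n) : dist a b ^ 2 = 2 - 2 * inner (𝕜 := ℝ) a.1 b.1 := by
  rw [show dist a b = dist a.1 b.1 from rfl, dist_eq_norm, norm_sub_sq_real, norm_one, norm_one]
  ring

lemma dist_sigmaS_le (p : SphereN n × unitInterval) :
    dist (sigmaS p) (SphereN.pt n) ≤ dist p.1 (SphereN.pt n) := by
  have h1 : dist (sigmaS p) (SphereN.pt n) ^ 2 ≤ dist p.1 (SphereN.pt n) ^ 2 := by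
    rw [dist_sq_eq, dist_sq_eq]
    have := phiS_sigmaS_ge p
    rw [phiS] at this
    rw [phiS] at this
    linarith
  have h2 : (0:ℝ) ≤ dist p.1 (SphereN.pt n) := dist_nonneg
  have h3 : (0:ℝ) ≤ dist (sigmaS p) (SphereN.pt n) := dist_nonneg
  nlinarith

lemma sigmaS_cont : Continuous (sigmaS (n := n)) := by
  rw [continuous_iff_continuousAt]
  rintro ⟨s₀, u₀⟩
  by_cases hs : s₀ = SphereN.pt n
  · subst hs
    rw [Metric.continuousAt_iff]
    intro ε hε
    refine ⟨ε, hε, ?_⟩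
    rintro ⟨s, u⟩ hd
    rw [sigmaS_pt]
    calc dist (sigmaS (s, u)) (SphereN.pt n) ≤ dist s (SphereN.pt n) := dist_sigmaS_le _
      _ ≤ dist ((s,u) : SphereN n × unitInterval) (SphereN.pt n, u₀) := by
          rw [Prod.dist_eq]; exact le_max_left _ _
      _ < ε := hd
  · have hphi : phiS s₀ < 1 :=
      lt_of_le_of_ne (phiS_le_one _) (fun h => hs (phiS_eq_one_iff.mp h))
    have hden : Continuous fun q : SphereN n × unitInterval => 1 - phiS q.1 := by fun_prop
    have hnum : Continuous fun q : SphereN n × unitInterval => (q.2:ℝ) - (1 - phiS q.1) := by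
      fun_prop
    have hne : (1 : ℝ) - phiS s₀ ≠ 0 := ne_of_gt (by linarith)
    have hdiv : ContinuousAt (fun q : SphereN n × unitInterval =>
        ((q.2:ℝ) - (1 - phiS q.1)) / (1 - phiS q.1)) (s₀, u₀) :=
      ContinuousAt.div hnum.continuousAt hden.continuousAt hne
    have hmc : ContinuousAt (mS (n := n)) (s₀, u₀) := by
      unfold mS
      exact ContinuousAt.sup continuousAt_const (ContinuousAt.inf continuousAt_const hdiv)
    have hsval : Continuous fun q : SphereN n × unitInterval =>
      (q.1.1 : EuclideanSpace ℝ (Fin (n+1))) := by fun_prop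
    have hvc : ContinuousAt (vS (n := n)) (s₀, u₀) := by
      unfold vS
      apply ContinuousAt.add
      · apply ContinuousAt.fun_smul
        · exact continuousAt_const.sub hmc
        · exact hsval.continuousAt
      · exact hmc.smul continuousAt_const
    have hval : ContinuousAt (fun p : SphereN n × unitInterval =>
        (‖vS p‖⁻¹ • vS p : EuclideanSpace ℝ (Fin (n+1)))) (s₀, u₀) :=
      ((hvc.norm.inv₀ (norm_ne_zero_iff.mpr (vS_ne_zero _))).smul hvc)
    exact hval.codRestrict _

lemma tauS_frontier {A : Type} [TopologicalSpace A] {f : A → SphereN n × unitInterval}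
    (hf : Continuous f) (a : A) (ha : a ∈ frontier {b | tauS (f b) = 0}) :
    tauS (f a) = 0 ∧ sigmaS (f a) = SphereN.pt n := by
  have hcl : IsClosed {b | tauS (f b) = 0} := isClosed_eq (tauS_cont.comp hf) continuous_const
  constructor
  · exact hcl.frontier_subset ha
  · have h2 : a ∈ closure {b | tauS (f b) ≠ 0} := by
      rw [frontier_eq_closure_inter_closure] at ha
      exact closure_mono (fun b hb => hb) ha.2
    have h3 : closure {b | tauS (f b) ≠ 0} ⊆ {b | sigmaS (f b) = SphereN.pt n} := by
      apply closure_minimal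
      · intro b hb; exact sigmaS_of_tauS_ne hb
      · exact isClosed_eq (sigmaS_cont.comp hf) continuous_const
    exact h3 h2

end SphAux

namespace IdDerivAux
open Set unitInterval SphAux
open scoped Classical

section Main

variable {X : Type} [TopologicalSpace X] {x y : X} {n : ℕ}

/-! ### quotient helpers -/

lemma wedgeRel_equiv {A B : Type} (a0 : A) (b0 : B) : Equivalence (Wedge2Rel a0 b0) := by
  constructor
  · intro p; exact Or.inl rfl
  · rintro p q (rfl | ⟨h1, h2⟩)
    · exact Or.inl rfl
    · exact Or.inr ⟨h2, h1⟩
  · rintro p q r (rfl | ⟨h1, h2⟩) h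
    · exact h
    · rcases h with rfl | ⟨h3, h4⟩
      · exact Or.inr ⟨h1, h2⟩
      · exact Or.inr ⟨h1, h4⟩

lemma wedge_exact {A B : Type} {a0 : A} {b0 : B} {e e' : A ⊕ B}
    (h : Quot.mk (Wedge2Rel a0 b0) e = Quot.mk (Wedge2Rel a0 b0) e') :
    Wedge2Rel a0 b0 e e' :=
  (wedgeRel_equiv a0 b0).eqvGen_iff.mp (Quot.eqvGen_exact h)

def mkW (x : X) (n : ℕ) : X ⊕ SphereN n → WedgeSphere X x n :=
  Quot.mk _

lemma mkW_glue : mkW x n (.inl x) = mkW x n (.inr (SphereN.pt n)) :=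
  Quot.sound (Or.inr ⟨Or.inl rfl, Or.inr rfl⟩)

lemma continuous_mkW : Continuous (mkW x n) := continuous_quot_mk

def mkG (x y : X) (n : ℕ) :
    PathsFrom X y ⊕ (PathsFromTo X y x × SphereN n) → PathsGlue X y x n :=
  Quot.mk _

lemma continuous_mkG : Continuous (mkG x y n) := continuous_quot_mk

lemma mkG_glue (δ : PathsFromTo X y x) :
    mkG x y n (.inr (δ, SphereN.pt n)) = mkG x y n (.inl ⟨δ.1, δ.2.1⟩) :=
  Quot.sound (Or.inr ⟨δ, rfl, rfl⟩)

def mkH (y x : X) (n : ℕ) : PathsFromTo X y x × SphereN n → HalfSmash (PathsFromTo X y x) n :=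
  Quot.mk _

lemma continuous_mkH : Continuous (mkH y x n) := continuous_quot_mk

lemma mkH_glue (δ δ' : PathsFromTo X y x) :
    mkH y x n (δ, SphereN.pt n) = mkH y x n (δ', SphereN.pt n) :=
  Quot.sound (Or.inr ⟨rfl, rfl⟩)

lemma retr_mk (e : X ⊕ SphereN n) :
    wedgeSphereRetr X x n (mkW x n e) = Sum.elim id (fun _ => x) e := rfl

/-! ### the map J : PathsGlue → HoFib -/

def Jfun (x y : X) (n : ℕ) :
    PathsFrom X y ⊕ (PathsFromTo X y x × SphereN n) → HoFib (wedgeSphereRetr X x n) y :=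
  Sum.elim
    (fun γ => ⟨(mkW x n (.inl (γ.1 1)), γ.1), γ.2, rfl⟩)
    (fun qs => ⟨(mkW x n (.inr qs.2), qs.1.1), qs.1.2.1, qs.1.2.2⟩)

lemma Jfun_consist (p q : PathsFrom X y ⊕ (PathsFromTo X y x × SphereN n))
    (h : p = q ∨ ∃ γ : PathsFromTo X y x,
      p = Sum.inr (γ, SphereN.pt n) ∧ q = Sum.inl ⟨γ.1, γ.2.1⟩) :
    Jfun x y n p = Jfun x y n q := by
  rcases h with rfl | ⟨δ, rfl, rfl⟩
  · rfl
  · apply Subtype.ext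
    apply Prod.ext
    · show mkW x n (.inr (SphereN.pt n)) = mkW x n (.inl (δ.1 1))
      rw [show δ.1 1 = x from δ.2.2, mkW_glue]
    · rfl

def Jmap (x y : X) (n : ℕ) : C(PathsGlue X y x n, HoFib (wedgeSphereRetr X x n) y) where
  toFun := Quot.lift (Jfun x y n) (Jfun_consist)
  continuous_toFun := by
    apply continuous_quot_lift
    apply Continuous.sumElim
    · apply Continuous.subtype_mk
      exact (continuous_mkW.comp (continuous_inl.comp
        ((ContinuousEvalConst.continuous_eval_const 1).comp continuous_subtype_val))).prodMk
        continuous_subtype_val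
    · apply Continuous.subtype_mk
      exact (continuous_mkW.comp (continuous_inr.comp continuous_snd)).prodMk
        (continuous_subtype_val.comp continuous_fst)

/-! ### the map K : HoFib → PathsGlue -/

variable (x y) in
def gbase (n : ℕ) : PathsGlue X y x n :=
  mkG x y n (.inl ⟨ContinuousMap.const _ y, rfl⟩)

def Kfun0 (d : NDR X x) (y : X) (n : ℕ) :
    X ⊕ SphereN n → C(unitInterval, X) → PathsGlue X y x n :=
  fun e γ =>
    match e with
    | .inl _ => if h : Dc d γ 0 = y then mkG x y n (.inl ⟨Dc d γ, h⟩) else gbase x y n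
    | .inr s =>
        if h : Dc d γ 0 = y ∧ Dc d γ 1 = x then mkG x y n (.inr (⟨Dc d γ, h⟩, s))
        else if h2 : Dc d γ 0 = y then mkG x y n (.inl ⟨Dc d γ, h2⟩) else gbase x y n

lemma Kfun0_glue (d : NDR X x) (γ : C(unitInterval, X)) :
    Kfun0 d y n (.inl x) γ = Kfun0 d y n (.inr (SphereN.pt n)) γ := by
  show (if h : Dc d γ 0 = y then mkG x y n (.inl ⟨Dc d γ, h⟩) else gbase x y n) = _
  by_cases h : Dc d γ 0 = y ∧ Dc d γ 1 = x
  · rw [dif_pos h.1]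
    show _ = (if h' : _ ∧ _ then _ else _)
    rw [dif_pos h]
    exact (mkG_glue ⟨Dc d γ, h⟩).symm
  · show _ = (if h' : _ ∧ _ then _ else _)
    rw [dif_neg h]

lemma Kfun0_consist (d : NDR X x) (γ : C(unitInterval, X)) :
    ∀ e e', Wedge2Rel x (SphereN.pt n) e e' → Kfun0 d y n e γ = Kfun0 d y n e' γ := by
  rintro e e' (rfl | ⟨h1, h2⟩)
  · rfl
  · have key := Kfun0_glue (y := y) (n := n) d γ
    rcases h1 with rfl | rfl <;> rcases h2 with rfl | rfl
    · rfl
    · exact key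
    · exact key.symm
    · rfl

def Kfun (d : NDR X x) (y : X) (n : ℕ) :
    HoFib (wedgeSphereRetr X x n) y → PathsGlue X y x n :=
  fun p => Quot.lift (fun e => Kfun0 d y n e p.1.2) (Kfun0_consist d p.1.2) p.1.1

end Main
end IdDerivAux

namespace IdDerivAux
open Set unitInterval SphAux Topology
open scoped Classical

section Main2
variable {X : Type} [TopologicalSpace X] {x y : X} {n : ℕ}

lemma continuous_Dc (d : NDR X x) : Continuous (Dc d) :=
  (continuous_Dmap d).comp (continuous_id.prodMk continuous_const)

lemma mkW_image_open {T : Set (X ⊕ SphereN n)} (hT : IsOpen T)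
    (hsat : ∀ e e', Wedge2Rel x (SphereN.pt n) e e' → e ∈ T → e' ∈ T) :
    IsOpen (mkW x n '' T) ∧ mkW x n ⁻¹' (mkW x n '' T) = T := by
  have hpre : mkW x n ⁻¹' (mkW x n '' T) = T := by
    apply Subset.antisymm
    · rintro e' ⟨e, heT, hee⟩
      exact hsat e e' (wedge_exact hee) heT
    · exact subset_preimage_image _ _
  refine ⟨?_, hpre⟩
  have h2 : IsOpen (mkW x n ⁻¹' (mkW x n '' T)) := by rw [hpre]; exact hT
  exact isQuotientMap_quot_mk.isOpen_preimage.mp h2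

lemma nbhd_caseC (d : NDR X x) {U : Set (PathsGlue X y x n)} (hU : IsOpen U)
    {γ : C(unitInterval, X)} (a : X)
    (hDc0 : Dc d γ 0 = y) (hDc1 : Dc d γ 1 = x)
    (hin : mkG x y n (.inl ⟨Dc d γ, hDc0⟩) ∈ U) :
    ∃ t : Set (WedgeSphere X x n × C(unitInterval, X)),
      t ∈ 𝓝 (mkW x n (.inl a), γ) ∧
      ∀ q : HoFib (wedgeSphereRetr X x n) y, q.1 ∈ t → Kfun d y n q ∈ U := by
  have hVmk : IsOpen (mkG x y n ⁻¹' U) := hU.preimage continuous_mkG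
  have hVP : IsOpen (Sum.inl ⁻¹' (mkG x y n ⁻¹' U) : Set (PathsFrom X y)) :=
    hVmk.preimage continuous_inl
  have hVQ : IsOpen (Sum.inr ⁻¹' (mkG x y n ⁻¹' U) :
      Set (PathsFromTo X y x × SphereN n)) := hVmk.preimage continuous_inr
  obtain ⟨W₁, hW₁o, hW₁⟩ := isOpen_induced_iff.mp hVP
  set δQ : PathsFromTo X y x := ⟨Dc d γ, hDc0, hDc1⟩ with hδQ
  have hinQ : (δQ, SphereN.pt n) ∈ Sum.inr ⁻¹' (mkG x y n ⁻¹' U) := by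
    show mkG x y n (.inr (δQ, SphereN.pt n)) ∈ U
    rw [mkG_glue δQ]
    exact hin
  obtain ⟨A, B, hAo, hBo, hAmem, hBmem, hAB⟩ :=
    isOpen_prod_iff.mp hVQ δQ (SphereN.pt n) hinQ
  obtain ⟨W₂, hW₂o, hW₂⟩ := isOpen_induced_iff.mp hAo
  set T : Set (X ⊕ SphereN n) := Set.range Sum.inl ∪ Sum.inr '' B with hT
  have hTo : IsOpen T := by
    rw [isOpen_sum_iff]
    constructor
    · convert isOpen_univ
      ext a'
      simp [hT]
    · convert hBo
      ext s'
      simp [hT]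
  have hTsat : ∀ e e', Wedge2Rel x (SphereN.pt n) e e' → e ∈ T → e' ∈ T := by
    rintro e e' (rfl | ⟨h1, h2⟩) he
    · exact he
    · rcases h2 with rfl | rfl
      · exact Or.inl ⟨x, rfl⟩
      · exact Or.inr ⟨SphereN.pt n, hBmem, rfl⟩
  obtain ⟨hTio, hTip⟩ := mkW_image_open hTo hTsat
  refine ⟨(mkW x n '' T) ×ˢ (Dc d ⁻¹' (W₁ ∩ W₂)), ?_, ?_⟩
  · apply IsOpen.mem_nhds (hTio.prod ((hW₁o.inter hW₂o).preimage (continuous_Dc d)))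
    refine ⟨⟨.inl a, Or.inl ⟨a, rfl⟩, rfl⟩, ?_, ?_⟩
    · have h := hin
      rw [show mkG x y n (.inl ⟨Dc d γ, hDc0⟩) ∈ U ↔
        (⟨Dc d γ, hDc0⟩ : PathsFrom X y) ∈ Subtype.val ⁻¹' W₁ from (Set.ext_iff.mp hW₁ _).symm] at h
      exact h
    · have h := hAmem
      rw [← hW₂] at h
      exact h
  · rintro ⟨⟨w', δ⟩, hyp⟩ ⟨hw', hδ⟩
    obtain ⟨e'', he''T, he''⟩ := hw'
    subst he''
    show Kfun0 d y n e'' δ ∈ U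
    cases e'' with
    | inl b =>
        have h0 : Dc d δ 0 = y := by rw [Dc_zero]; exact hyp.1
        show (if h : _ then _ else _) ∈ U
        rw [dif_pos h0]
        have hmem : (⟨Dc d δ, h0⟩ : PathsFrom X y) ∈ Subtype.val ⁻¹' W₁ := hδ.1
        exact (Set.ext_iff.mp hW₁ _).mp hmem
    | inr s' =>
        have hs'B : s' ∈ B := by
          rcases he''T with ⟨b, hb⟩ | ⟨s'', hs'', he⟩
          · simp at hb
          · injection he with h
            rwa [h] at hs''
        have hδ1 : δ 1 = x := hyp.2
        have h0 : Dc d δ 0 = y := by rw [Dc_zero]; exact hyp.1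
        have h1 : Dc d δ 1 = x := by rw [Dc_one, hδ1, d.rho_x]
        show (if h : _ ∧ _ then _ else _) ∈ U
        rw [dif_pos ⟨h0, h1⟩]
        have hmem : ((⟨Dc d δ, h0, h1⟩ : PathsFromTo X y x), s') ∈ A ×ˢ B := by
          refine ⟨?_, hs'B⟩
          show _ ∈ A
          rw [← hW₂]
          exact hδ.2
        exact hAB hmem

lemma not_closure_of_rho_ne (d : NDR X x) {a : X} (h : d.rho a 1 ≠ x) :
    a ∉ closure ({x} : Set X) := by
  intro hcl
  apply h
  apply d.halo
  have hc : Continuous fun w : X => d.tau w 1 :=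
    d.cont_tau.comp (continuous_id.prodMk continuous_const)
  have h1 : d.tau a 1 ∈ closure ((fun w => d.tau w 1) '' {x}) :=
    image_closure_subset_closure_image hc ⟨a, hcl, rfl⟩
  rw [image_singleton, d.tau_x, closure_singleton, mem_singleton_iff] at h1
  rw [h1]
  intro h10
  have := congrArg Subtype.val h10
  norm_num at this

lemma nbhd_caseA (d : NDR X x) {U : Set (PathsGlue X y x n)} (hU : IsOpen U)
    {γ : C(unitInterval, X)} {a : X} (hax : d.rho a 1 ≠ x)
    (hDc0 : Dc d γ 0 = y)
    (hin : mkG x y n (.inl ⟨Dc d γ, hDc0⟩) ∈ U) :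
    ∃ t : Set (WedgeSphere X x n × C(unitInterval, X)),
      t ∈ 𝓝 (mkW x n (.inl a), γ) ∧
      ∀ q : HoFib (wedgeSphereRetr X x n) y, q.1 ∈ t → Kfun d y n q ∈ U := by
  have hVmk : IsOpen (mkG x y n ⁻¹' U) := hU.preimage continuous_mkG
  have hVP : IsOpen (Sum.inl ⁻¹' (mkG x y n ⁻¹' U) : Set (PathsFrom X y)) :=
    hVmk.preimage continuous_inl
  obtain ⟨W₁, hW₁o, hW₁⟩ := isOpen_induced_iff.mp hVP
  have hacl := not_closure_of_rho_ne d hax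
  set T : Set (X ⊕ SphereN n) := Sum.inl '' (closure ({x} : Set X))ᶜ with hT
  have hTo : IsOpen T := by
    rw [isOpen_sum_iff]
    constructor
    · rw [hT, Set.preimage_image_eq _ Sum.inl_injective]
      exact isClosed_closure.isOpen_compl
    · convert isOpen_empty
      ext s'
      simp [hT]
  have hTsat : ∀ e e', Wedge2Rel x (SphereN.pt n) e e' → e ∈ T → e' ∈ T := by
    rintro e e' (rfl | ⟨h1, h2⟩) he
    · exact he
    · exfalso
      obtain ⟨b, hb, rfl⟩ := he
      rcases h1 with h1 | h1
      · injection h1 with hbx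
        exact hb (hbx ▸ subset_closure rfl)
      · exact absurd h1 (by simp)
  obtain ⟨hTio, hTip⟩ := mkW_image_open hTo hTsat
  refine ⟨(mkW x n '' T) ×ˢ (Dc d ⁻¹' W₁), ?_, ?_⟩
  · apply IsOpen.mem_nhds (hTio.prod (hW₁o.preimage (continuous_Dc d)))
    refine ⟨⟨.inl a, ⟨a, hacl, rfl⟩, rfl⟩, ?_⟩
    have h := hin
    rw [show mkG x y n (.inl ⟨Dc d γ, hDc0⟩) ∈ U ↔
      (⟨Dc d γ, hDc0⟩ : PathsFrom X y) ∈ Subtype.val ⁻¹' W₁ from (Set.ext_iff.mp hW₁ _).symm] at h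
    exact h
  · rintro ⟨⟨w', δ⟩, hyp⟩ ⟨hw', hδ⟩
    obtain ⟨e'', he''T, he''⟩ := hw'
    subst he''
    show Kfun0 d y n e'' δ ∈ U
    cases e'' with
    | inl b =>
        have h0 : Dc d δ 0 = y := by rw [Dc_zero]; exact hyp.1
        show (if h : _ then _ else _) ∈ U
        rw [dif_pos h0]
        have hmem : (⟨Dc d δ, h0⟩ : PathsFrom X y) ∈ Subtype.val ⁻¹' W₁ := hδ
        exact (Set.ext_iff.mp hW₁ _).mp hmem
    | inr s' =>
        exfalso
        obtain ⟨b, hb, he⟩ := he''T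
        simp at he

lemma nbhd_caseB (d : NDR X x) {U : Set (PathsGlue X y x n)} (hU : IsOpen U)
    {γ : C(unitInterval, X)} {s : SphereN n} (hs : s ≠ SphereN.pt n)
    (hDc0 : Dc d γ 0 = y) (hDc1 : Dc d γ 1 = x)
    (hin : mkG x y n (.inr (⟨Dc d γ, hDc0, hDc1⟩, s)) ∈ U) :
    ∃ t : Set (WedgeSphere X x n × C(unitInterval, X)),
      t ∈ 𝓝 (mkW x n (.inr s), γ) ∧
      ∀ q : HoFib (wedgeSphereRetr X x n) y, q.1 ∈ t → Kfun d y n q ∈ U := by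
  have hVmk : IsOpen (mkG x y n ⁻¹' U) := hU.preimage continuous_mkG
  have hVQ : IsOpen (Sum.inr ⁻¹' (mkG x y n ⁻¹' U) :
      Set (PathsFromTo X y x × SphereN n)) := hVmk.preimage continuous_inr
  obtain ⟨A, B, hAo, hBo, hAmem, hBmem, hAB⟩ :=
    isOpen_prod_iff.mp hVQ ⟨Dc d γ, hDc0, hDc1⟩ s hin
  obtain ⟨W₂, hW₂o, hW₂⟩ := isOpen_induced_iff.mp hAo
  set T : Set (X ⊕ SphereN n) := Sum.inr '' (B \ {SphereN.pt n}) with hT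
  have hTo : IsOpen T := by
    rw [isOpen_sum_iff]
    constructor
    · convert isOpen_empty
      ext a'
      simp [hT]
    · rw [hT, Set.preimage_image_eq _ Sum.inr_injective]
      exact hBo.sdiff isClosed_singleton
  have hTsat : ∀ e e', Wedge2Rel x (SphereN.pt n) e e' → e ∈ T → e' ∈ T := by
    rintro e e' (rfl | ⟨h1, h2⟩) he
    · exact he
    · exfalso
      obtain ⟨s'', hs'', rfl⟩ := he
      rcases h1 with h1 | h1
      · exact absurd h1 (by simp)
      · injection h1 with h1'
        exact hs''.2 (by rw [h1']; rfl)
  obtain ⟨hTio, hTip⟩ := mkW_image_open hTo hTsat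
  refine ⟨(mkW x n '' T) ×ˢ (Dc d ⁻¹' W₂), ?_, ?_⟩
  · apply IsOpen.mem_nhds (hTio.prod (hW₂o.preimage (continuous_Dc d)))
    refine ⟨⟨.inr s, ⟨s, ⟨hBmem, hs⟩, rfl⟩, rfl⟩, ?_⟩
    have h := hAmem
    rw [← hW₂] at h
    exact h
  · rintro ⟨⟨w', δ⟩, hyp⟩ ⟨hw', hδ⟩
    obtain ⟨e'', he''T, he''⟩ := hw'
    subst he''
    show Kfun0 d y n e'' δ ∈ U
    cases e'' with
    | inl b =>
        exfalso
        obtain ⟨s'', hs'', he⟩ := he''T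
        simp at he
    | inr s' =>
        have hs'B : s' ∈ B := by
          obtain ⟨s'', hs'', he⟩ := he''T
          injection he with h
          rw [← h]
          exact hs''.1
        have hδ1 : δ 1 = x := hyp.2
        have h0 : Dc d δ 0 = y := by rw [Dc_zero]; exact hyp.1
        have h1 : Dc d δ 1 = x := by rw [Dc_one, hδ1, d.rho_x]
        show (if h : _ ∧ _ then _ else _) ∈ U
        rw [dif_pos ⟨h0, h1⟩]
        have hmem : ((⟨Dc d δ, h0, h1⟩ : PathsFromTo X y x), s') ∈ A ×ˢ B := by
          refine ⟨?_, hs'B⟩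
          show _ ∈ A
          rw [← hW₂]
          exact hδ
        exact hAB hmem

lemma continuous_Kfun (d : NDR X x) : Continuous (Kfun d y n) := by
  rw [continuous_def]
  intro U hU
  rw [isOpen_iff_mem_nhds]
  rintro ⟨⟨w, γ⟩, hyp⟩ hK
  refine (Filter.ext_iff.mp (nhds_subtype_eq_comap (x := (w, γ)) (h := hyp)) _).mpr
    (Filter.mem_comap.mpr ?_)
  obtain ⟨e, he⟩ := Quot.exists_rep w
  cases e with
  | inl a =>
      subst he
      have hyp1 : γ 1 = a := hyp.2
      have hDc0 : Dc d γ 0 = y := by rw [Dc_zero]; exact hyp.1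
      by_cases hax : d.rho a 1 = x
      · have hDc1 : Dc d γ 1 = x := by rw [Dc_one, hyp1, hax]
        have hin : mkG x y n (.inl ⟨Dc d γ, hDc0⟩) ∈ U := by
          have heq : Kfun d y n ⟨(Quot.mk _ (.inl a), γ), hyp⟩ =
              mkG x y n (.inl ⟨Dc d γ, hDc0⟩) := by
            show (if h : _ then _ else _) = _
            rw [dif_pos hDc0]
          rw [← heq]; exact hK
        obtain ⟨t, ht, hsub⟩ := nbhd_caseC d hU a hDc0 hDc1 hin
        exact ⟨t, ht, fun q' hq' => hsub q' hq'⟩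
      · have hin : mkG x y n (.inl ⟨Dc d γ, hDc0⟩) ∈ U := by
          have heq : Kfun d y n ⟨(Quot.mk _ (.inl a), γ), hyp⟩ =
              mkG x y n (.inl ⟨Dc d γ, hDc0⟩) := by
            show (if h : _ then _ else _) = _
            rw [dif_pos hDc0]
          rw [← heq]; exact hK
        obtain ⟨t, ht, hsub⟩ := nbhd_caseA d hU hax hDc0 hin
        exact ⟨t, ht, fun q' hq' => hsub q' hq'⟩
  | inr s =>
      by_cases hspt : s = SphereN.pt n
      · subst hspt
        have hw : w = mkW x n (.inl x) := by rw [← he]; exact mkW_glue.symm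
        subst hw
        have hyp1 : γ 1 = x := hyp.2
        have hDc0 : Dc d γ 0 = y := by rw [Dc_zero]; exact hyp.1
        have hDc1 : Dc d γ 1 = x := by rw [Dc_one, hyp1, d.rho_x]
        have hin : mkG x y n (.inl ⟨Dc d γ, hDc0⟩) ∈ U := by
          have heq : Kfun d y n ⟨(mkW x n (.inl x), γ), hyp⟩ =
              mkG x y n (.inl ⟨Dc d γ, hDc0⟩) := by
            show (if h : _ then _ else _) = _
            rw [dif_pos hDc0]
          rw [← heq]; exact hK
        obtain ⟨t, ht, hsub⟩ := nbhd_caseC d hU x hDc0 hDc1 hin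
        exact ⟨t, ht, fun q' hq' => hsub q' hq'⟩
      · subst he
        have hyp1 : γ 1 = x := hyp.2
        have hDc0 : Dc d γ 0 = y := by rw [Dc_zero]; exact hyp.1
        have hDc1 : Dc d γ 1 = x := by rw [Dc_one, hyp1, d.rho_x]
        have hin : mkG x y n (.inr (⟨Dc d γ, hDc0, hDc1⟩, s)) ∈ U := by
          have heq : Kfun d y n ⟨(Quot.mk _ (.inr s), γ), hyp⟩ =
              mkG x y n (.inr (⟨Dc d γ, hDc0, hDc1⟩, s)) := by
            show (if h : _ ∧ _ then _ else _) = _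
            rw [dif_pos ⟨hDc0, hDc1⟩]
          rw [← heq]; exact hK
        obtain ⟨t, ht, hsub⟩ := nbhd_caseB d hU hspt hDc0 hDc1 hin
        exact ⟨t, ht, fun q' hq' => hsub q' hq'⟩

def Kmap (d : NDR X x) (y : X) (n : ℕ) :
    C(HoFib (wedgeSphereRetr X x n) y, PathsGlue X y x n) :=
  ⟨Kfun d y n, continuous_Kfun d⟩

end Main2
end IdDerivAux

namespace IdDerivAux
open Set unitInterval SphAux Topology
open scoped Classical

section Main3
variable {X : Type} [TopologicalSpace X] {x y : X} {n : ℕ}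

/-! ### the homotopy `K ∘ J ≃ id` on `PathsGlue` -/

lemma DmapP_mem (d : NDR X x) (γP : PathsFrom X y) (u : unitInterval) :
    Dmap d γP.1 u 0 = y := by rw [Dmap_apply_zero]; exact γP.2

lemma DmapQ_mem0 (d : NDR X x) (γQ : PathsFromTo X y x) (u : unitInterval) :
    Dmap d γQ.1 u 0 = y := by rw [Dmap_apply_zero]; exact γQ.2.1

lemma DmapQ_mem1 (d : NDR X x) (γQ : PathsFromTo X y x) (u : unitInterval) :
    Dmap d γQ.1 u 1 = x := by rw [Dmap_apply_one, γQ.2.2, d.rho_x]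

def homG (d : NDR X x) (y : X) (n : ℕ) :
    PathsGlue X y x n → C(unitInterval, PathsGlue X y x n) :=
  Quot.lift (Sum.elim
    (fun γP => ⟨fun u => mkG x y n (.inl ⟨Dmap d γP.1 u, DmapP_mem d γP u⟩),
      continuous_mkG.comp (continuous_inl.comp (Continuous.subtype_mk
        ((continuous_Dmap d).comp (continuous_const.prodMk continuous_id))
        (fun u => DmapP_mem d γP u)))⟩)
    (fun qs => ⟨fun u => mkG x y n (.inr (⟨Dmap d qs.1.1 u,
        ⟨DmapQ_mem0 d qs.1 u, DmapQ_mem1 d qs.1 u⟩⟩, qs.2)),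
      continuous_mkG.comp (continuous_inr.comp ((Continuous.subtype_mk
        ((continuous_Dmap d).comp (continuous_const.prodMk continuous_id))
        (fun u => ⟨DmapQ_mem0 d qs.1 u, DmapQ_mem1 d qs.1 u⟩)).prodMk
        continuous_const))⟩))
    (by
      rintro p q (rfl | ⟨δ, rfl, rfl⟩)
      · rfl
      · apply ContinuousMap.ext
        intro u
        exact mkG_glue ⟨Dmap d δ.1 u, DmapQ_mem0 d δ u, DmapQ_mem1 d δ u⟩)

lemma continuous_homG (d : NDR X x) :
    Continuous (homG d y n : PathsGlue X y x n → _) := by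
  apply continuous_quot_lift
  apply Continuous.sumElim
  · apply ContinuousMap.continuous_of_continuous_uncurry
    exact continuous_mkG.comp (continuous_inl.comp (Continuous.subtype_mk
      ((continuous_Dmap d).comp ((continuous_subtype_val.comp continuous_fst).prodMk
        continuous_snd)) (fun p => DmapP_mem d p.1 p.2)))
  · apply ContinuousMap.continuous_of_continuous_uncurry
    exact continuous_mkG.comp (continuous_inr.comp ((Continuous.subtype_mk
      ((continuous_Dmap d).comp (((continuous_subtype_val.comp continuous_fst).comp
        continuous_fst).prodMk continuous_snd))
      (fun p => ⟨DmapQ_mem0 d p.1.1 p.2, DmapQ_mem1 d p.1.1 p.2⟩)).prodMk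
      (continuous_snd.comp continuous_fst)))

lemma homG_zero (d : NDR X x) (z : PathsGlue X y x n) :
    homG d y n z 0 = Kfun d y n ((Jmap x y n) z) := by
  induction z using Quot.ind with
  | _ e =>
    cases e with
    | inl γP =>
        have hA : (Jmap x y n) (Quot.mk _ (Sum.inl γP)) = Jfun x y n (Sum.inl γP) := rfl
        have hB : Kfun d y n (Jfun x y n (Sum.inl γP)) =
            (if h : Dc d γP.1 0 = y then mkG x y n (.inl ⟨Dc d γP.1, h⟩)
              else gbase x y n) := rfl
        rw [hA, hB, dif_pos (show Dc d γP.1 0 = y by rw [Dc_zero]; exact γP.2)]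
        rfl
    | inr qs =>
        have hA : (Jmap x y n) (Quot.mk _ (Sum.inr qs)) = Jfun x y n (Sum.inr qs) := rfl
        have hB : Kfun d y n (Jfun x y n (Sum.inr qs)) =
            (if h : Dc d qs.1.1 0 = y ∧ Dc d qs.1.1 1 = x
              then mkG x y n (.inr (⟨Dc d qs.1.1, h⟩, qs.2))
              else if h2 : Dc d qs.1.1 0 = y then mkG x y n (.inl ⟨Dc d qs.1.1, h2⟩)
              else gbase x y n) := rfl
        rw [hA, hB, dif_pos (⟨show Dc d qs.1.1 0 = y by rw [Dc_zero]; exact qs.1.2.1,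
          show Dc d qs.1.1 1 = x by rw [Dc_one, qs.1.2.2, d.rho_x]⟩)]
        rfl

lemma homG_one (d : NDR X x) (z : PathsGlue X y x n) : homG d y n z 1 = z := by
  induction z using Quot.ind with
  | _ e =>
    cases e with
    | inl γP =>
        exact congrArg (fun μ => mkG x y n (.inl μ)) (Subtype.ext (Dmap_one d γP.1))
    | inr qs =>
        exact congrArg (fun μ => mkG x y n (.inr μ))
          (Prod.ext (Subtype.ext (Dmap_one d qs.1.1)) rfl)

def homotopyG (d : NDR X x) (y : X) (n : ℕ) :
    ContinuousMap.Homotopy ((Kmap d y n).comp (Jmap x y n)) (ContinuousMap.id _) where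
  toContinuousMap := ⟨fun p => homG d y n p.2 p.1,
    ContinuousEval.continuous_eval.comp
      (((continuous_homG d).comp continuous_snd).prodMk continuous_fst)⟩
  map_zero_left := fun z => homG_zero d z
  map_one_left := fun z => homG_one d z

/-! ### the homotopy `J ∘ K ≃ id` on the homotopy fiber -/

def homW (d : NDR X x) (n : ℕ) : WedgeSphere X x n → C(unitInterval, WedgeSphere X x n) :=
  Quot.lift (Sum.elim
    (fun a => ⟨fun u => mkW x n (.inl (d.rho a (proj01 (1 - (u : ℝ))))),
      continuous_mkW.comp (continuous_inl.comp (d.cont_rho.comp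
        (continuous_const.prodMk (proj01_cont.comp (by fun_prop)))))⟩)
    (fun s => ⟨fun _ => mkW x n (.inr s), continuous_const⟩))
    (by
      have key : ∀ u : unitInterval,
          mkW x n (.inl (d.rho x (proj01 (1 - (u : ℝ))))) = mkW x n (.inr (SphereN.pt n)) := by
        intro u
        rw [d.rho_x, mkW_glue]
      rintro p q (rfl | ⟨h1, h2⟩)
      · rfl
      · rcases h1 with rfl | rfl <;> rcases h2 with rfl | rfl
        · rfl
        · exact ContinuousMap.ext key
        · exact ContinuousMap.ext fun u => (key u).symm
        · rfl)

lemma continuous_homW (d : NDR X x) : Continuous (homW d n (x := x)) := by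
  apply continuous_quot_lift
  apply Continuous.sumElim
  · apply ContinuousMap.continuous_of_continuous_uncurry
    exact continuous_mkW.comp (continuous_inl.comp (d.cont_rho.comp
      (continuous_fst.prodMk (proj01_cont.comp (by fun_prop)))))
  · apply ContinuousMap.continuous_of_continuous_uncurry
    exact continuous_mkW.comp (continuous_inr.comp continuous_fst)

lemma homW_one (d : NDR X x) (w : WedgeSphere X x n) : homW d n w 1 = w := by
  induction w using Quot.ind with
  | _ e =>
    cases e with
    | inl a =>
        show mkW x n (.inl (d.rho a (proj01 (1 - ((1 : unitInterval) : ℝ))))) = _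
        have h0 : (1:ℝ) - ((1 : unitInterval) : ℝ) = 0 := by norm_num
        rw [h0, proj01_zero, d.rho_zero]
        rfl
    | inr s => rfl

lemma homHF_cond (d : NDR X x) (w : WedgeSphere X x n) (γ : C(unitInterval, X))
    (h1 : γ 1 = wedgeSphereRetr X x n w) (u : unitInterval) :
    Dmap d γ u 1 = wedgeSphereRetr X x n (homW d n w u) := by
  induction w using Quot.ind with
  | _ e =>
    cases e with
    | inl a =>
        rw [Dmap_apply_one]
        show d.rho (γ 1) _ = d.rho a _
        rw [show γ 1 = a from h1]
    | inr s =>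
        rw [Dmap_apply_one]
        show d.rho (γ 1) _ = x
        rw [show γ 1 = x from h1, d.rho_x]

def homHF (d : NDR X x) (y : X) (n : ℕ) :
    unitInterval × HoFib (wedgeSphereRetr X x n) y → HoFib (wedgeSphereRetr X x n) y :=
  fun p => ⟨(homW d n p.2.1.1 p.1, Dmap d p.2.1.2 p.1),
    ⟨by rw [Dmap_apply_zero]; exact p.2.2.1, homHF_cond d p.2.1.1 p.2.1.2 p.2.2.2 p.1⟩⟩

lemma continuous_homHF (d : NDR X x) : Continuous (homHF d y n (x := x)) := by
  apply Continuous.subtype_mk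
  apply Continuous.prodMk
  · exact ContinuousEval.continuous_eval.comp
      (((continuous_homW d).comp (continuous_fst.comp (continuous_subtype_val.comp
        continuous_snd))).prodMk continuous_fst)
  · exact (continuous_Dmap d).comp ((continuous_snd.comp (continuous_subtype_val.comp
      continuous_snd)).prodMk continuous_fst)

lemma homHF_zero (d : NDR X x) (q : HoFib (wedgeSphereRetr X x n) y) :
    homHF d y n (0, q) = (Jmap x y n) (Kfun d y n q) := by
  obtain ⟨⟨w, γ⟩, hyp⟩ := q
  revert hyp
  induction w using Quot.ind with
  | _ e =>
    intro hyp
    cases e with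
    | inl a =>
        have h0 : Dc d γ 0 = y := by rw [Dc_zero]; exact hyp.1
        have hK : Kfun d y n ⟨(Quot.mk _ (.inl a), γ), hyp⟩ =
            mkG x y n (.inl ⟨Dc d γ, h0⟩) := by
          show (if h : _ then _ else _) = _
          rw [dif_pos h0]
        rw [hK]
        have hJ : (Jmap x y n) (mkG x y n (.inl ⟨Dc d γ, h0⟩)) =
            Jfun x y n (.inl ⟨Dc d γ, h0⟩) := rfl
        rw [hJ]
        apply Subtype.ext
        apply Prod.ext
        · show mkW x n (.inl (d.rho a (proj01 (1 - ((0 : unitInterval) : ℝ))))) =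
            mkW x n (.inl (Dc d γ 1))
          have h1 : (1:ℝ) - ((0 : unitInterval) : ℝ) = 1 := by norm_num
          rw [h1, proj01_one, Dc_one, show γ 1 = a from hyp.2]
        · rfl
    | inr s =>
        have h0 : Dc d γ 0 = y := by rw [Dc_zero]; exact hyp.1
        have h1 : Dc d γ 1 = x := by
          rw [Dc_one, show γ 1 = x from hyp.2, d.rho_x]
        have hK : Kfun d y n ⟨(Quot.mk _ (.inr s), γ), hyp⟩ =
            mkG x y n (.inr (⟨Dc d γ, h0, h1⟩, s)) := by
          show (if h : _ ∧ _ then _ else _) = _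
          rw [dif_pos ⟨h0, h1⟩]
        rw [hK]
        rfl

lemma homHF_one (d : NDR X x) (q : HoFib (wedgeSphereRetr X x n) y) :
    homHF d y n (1, q) = q := by
  obtain ⟨⟨w, γ⟩, hyp⟩ := q
  apply Subtype.ext
  apply Prod.ext
  · exact homW_one d w
  · exact Dmap_one d γ

def homotopyHF (d : NDR X x) (y : X) (n : ℕ) :
    ContinuousMap.Homotopy ((Jmap x y n).comp (Kmap d y n)) (ContinuousMap.id _) where
  toContinuousMap := ⟨homHF d y n, continuous_homHF d⟩
  map_zero_left := fun q => homHF_zero d q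
  map_one_left := fun q => homHF_one d q

/-- Homotopy equivalence 1: the homotopy fiber and the glued path space. -/
noncomputable def equivHG (d : NDR X x) (y : X) (n : ℕ) :
    ContinuousMap.HomotopyEquiv (HoFib (wedgeSphereRetr X x n) y) (PathsGlue X y x n) where
  toFun := Kmap d y n
  invFun := Jmap x y n
  left_inv := ⟨homotopyHF d y n⟩
  right_inv := ⟨homotopyG d y n⟩

end Main3
end IdDerivAux

namespace IdDerivAux
open Set unitInterval SphAux Topology
open scoped Classical

section MainB
variable {X : Type} [TopologicalSpace X] {x y : X} {n : ℕ}

/-! ### reparametrization (contraction of the path space) -/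

def Con (γ : C(unitInterval, X)) (v : unitInterval) : C(unitInterval, X) :=
  ⟨fun t => γ ⟨(v : ℝ) * (t : ℝ), unitInterval.mul_mem v.2 t.2⟩,
    γ.continuous.comp (Continuous.subtype_mk
      (continuous_const.mul continuous_subtype_val) _)⟩

lemma Con_one (γ : C(unitInterval, X)) : Con γ 1 = γ :=
  ContinuousMap.ext fun t => congrArg γ (Subtype.ext (by simp))

lemma Con_apply_zero (γ : C(unitInterval, X)) (v : unitInterval) : Con γ v 0 = γ 0 :=
  congrArg γ (Subtype.ext (by simp))

lemma Con_zero_apply (γ : C(unitInterval, X)) (t : unitInterval) : Con γ 0 t = γ 0 :=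
  congrArg γ (Subtype.ext (by simp))

lemma continuous_Con :
    Continuous fun p : C(unitInterval, X) × unitInterval => Con p.1 p.2 := by
  apply ContinuousMap.continuous_of_continuous_uncurry
  exact ContinuousEval.continuous_eval.comp ((continuous_fst.comp continuous_fst).prodMk
    (Continuous.subtype_mk (((continuous_subtype_val.comp (continuous_snd.comp
      continuous_fst))).mul (continuous_subtype_val.comp continuous_snd)) _))

lemma ConQ_start (γQ : PathsFromTo X y x) (v : unitInterval) : Con γQ.1 v 0 = y :=
  (Con_apply_zero _ _).trans γQ.2.1

lemma ConP_start (γP : PathsFrom X y) (v : unitInterval) : Con γP.1 v 0 = y :=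
  (Con_apply_zero _ _).trans γP.2

/-! ### the scaled collapse parameter -/

def nuS (p : SphereN n × unitInterval) : unitInterval := proj01 (1 - tauS p)

lemma continuous_nuS : Continuous (nuS (n := n)) :=
  proj01_cont.comp (continuous_const.sub tauS_cont)

lemma nuS_pt (u : unitInterval) : nuS (SphereN.pt n, u) = unitInterval.symm u := by
  apply Subtype.ext
  rw [nuS, tauS_pt]
  show (projIcc (0:ℝ) 1 zero_le_one (1 - (u:ℝ)) : ℝ) = 1 - (u:ℝ)
  rw [projIcc_of_mem]
  constructor
  · have := u.2.2; linarith
  · have := u.2.1; linarith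

lemma nuS_of_tau_zero {p : SphereN n × unitInterval} (h : tauS p = 0) : nuS p = 1 := by
  rw [nuS, h, sub_zero]
  exact proj01_one

lemma tauS_pt_one_ne : tauS (SphereN.pt n, 1) ≠ 0 := by
  rw [tauS_pt]
  norm_num

/-! ### the interpolation map Φ -/

def Phiraw (x y : X) (γQ : PathsFromTo X y x) (s : SphereN n) (u : unitInterval) :
    PathsGlue X y x n :=
  if tauS (s, u) = 0 then mkG x y n (.inr (γQ, sigmaS (s, u)))
  else mkG x y n (.inl ⟨Con γQ.1 (nuS (s, u)), ConQ_start γQ _⟩)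

lemma continuous_Phiraw {A : Type} [TopologicalSpace A] {f : A → PathsFromTo X y x}
    {g : A → SphereN n} {h : A → unitInterval}
    (hf : Continuous f) (hg : Continuous g) (hh : Continuous h) :
    Continuous fun a => Phiraw x y (f a) (g a) (h a) := by
  apply Continuous.if
  · intro a ha
    obtain ⟨ht0, hsig⟩ := tauS_frontier (hg.prodMk hh) a ha
    rw [hsig, mkG_glue (f a)]
    have hc : Con (f a).1 (nuS (g a, h a)) = (f a).1 := by
      rw [nuS_of_tau_zero ht0, Con_one]
    exact congrArg (fun μ => mkG x y n (.inl μ)) (Subtype.ext hc.symm)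
  · exact continuous_mkG.comp (continuous_inr.comp
      (hf.prodMk (sigmaS_cont.comp (hg.prodMk hh))))
  · exact continuous_mkG.comp (continuous_inl.comp (Continuous.subtype_mk
      (continuous_Con.comp ((continuous_subtype_val.comp hf).prodMk
        (continuous_nuS.comp (hg.prodMk hh)))) _))

/-! ### the collapse map f and its homotopy inverse g -/

def fH (γ₀ : PathsFromTo X y x) (n : ℕ) :
    C(PathsGlue X y x n, HalfSmash (PathsFromTo X y x) n) where
  toFun := Quot.lift (Sum.elim (fun _ => mkH y x n (γ₀, SphereN.pt n))
    (fun qs => mkH y x n qs))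
    (by
      rintro p q (rfl | ⟨δ, rfl, rfl⟩)
      · rfl
      · exact mkH_glue δ γ₀)
  continuous_toFun := by
    apply continuous_quot_lift
    exact Continuous.sumElim continuous_const continuous_mkH

def gH (x y : X) (n : ℕ) :
    C(HalfSmash (PathsFromTo X y x) n, PathsGlue X y x n) where
  toFun := Quot.lift (fun qs => Phiraw x y qs.1 qs.2 1)
    (by
      rintro ⟨γ, s⟩ ⟨γ', s'⟩ (heq | ⟨h1, h2⟩)
      · rw [heq]
      · cases h1
        cases h2
        show Phiraw x y γ (SphereN.pt n) 1 = Phiraw x y γ' (SphereN.pt n) 1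
        unfold Phiraw
        rw [if_neg tauS_pt_one_ne, if_neg tauS_pt_one_ne]
        refine congrArg (fun μ => mkG x y n (.inl μ)) (Subtype.ext ?_)
        show Con γ.1 (nuS (SphereN.pt n, 1)) = Con γ'.1 (nuS (SphereN.pt n, 1))
        apply ContinuousMap.ext
        intro t
        rw [show nuS (SphereN.pt n, 1) = 0 by rw [nuS_pt, unitInterval.symm_one]]
        rw [Con_zero_apply, Con_zero_apply, γ.2.1, γ'.2.1])
  continuous_toFun := by
    apply continuous_quot_lift
    exact continuous_Phiraw continuous_fst continuous_snd continuous_const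

/-! ### the deformation homotopies -/

def homPhi (x y : X) (n : ℕ) : PathsGlue X y x n → C(unitInterval, PathsGlue X y x n) :=
  Quot.lift (Sum.elim
    (fun γP => ⟨fun u => mkG x y n (.inl ⟨Con γP.1 (unitInterval.symm u), ConP_start γP _⟩),
      continuous_mkG.comp (continuous_inl.comp (Continuous.subtype_mk
        (continuous_Con.comp (continuous_const.prodMk unitInterval.continuous_symm)) _))⟩)
    (fun qs => ⟨fun u => Phiraw x y qs.1 qs.2 u,
      continuous_Phiraw continuous_const continuous_const continuous_id⟩))
    (by
      rintro p q (rfl | ⟨δ, rfl, rfl⟩)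
      · rfl
      · apply ContinuousMap.ext
        intro u
        show Phiraw x y δ (SphereN.pt n) u = _
        by_cases hu : tauS (SphereN.pt n, u) = 0
        · have hu0 : u = 0 := by
            apply Subtype.ext
            rw [tauS_pt] at hu
            exact hu
          subst hu0
          unfold Phiraw
          rw [if_pos hu, sigmaS_pt, mkG_glue δ]
          refine congrArg (fun μ => mkG x y n (.inl μ)) (Subtype.ext ?_)
          show (δ.1 : C(unitInterval, X)) = Con δ.1 (unitInterval.symm 0)
          rw [unitInterval.symm_zero, Con_one]
        · unfold Phiraw
          rw [if_neg hu]
          refine congrArg (fun μ => mkG x y n (.inl μ)) (Subtype.ext ?_)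
          show Con δ.1 (nuS (SphereN.pt n, u)) = Con δ.1 (unitInterval.symm u)
          rw [nuS_pt])

lemma continuous_homPhi : Continuous (homPhi x y n) := by
  apply continuous_quot_lift
  apply Continuous.sumElim
  · apply ContinuousMap.continuous_of_continuous_uncurry
    exact continuous_mkG.comp (continuous_inl.comp (Continuous.subtype_mk
      (continuous_Con.comp ((continuous_subtype_val.comp continuous_fst).prodMk
        (unitInterval.continuous_symm.comp continuous_snd))) _))
  · apply ContinuousMap.continuous_of_continuous_uncurry
    exact continuous_Phiraw (continuous_fst.comp continuous_fst)
      (continuous_snd.comp continuous_fst) continuous_snd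

lemma homPhi_zero (z : PathsGlue X y x n) : homPhi x y n z 0 = z := by
  induction z using Quot.ind with
  | _ e =>
    cases e with
    | inl γP =>
        refine congrArg (fun μ => mkG x y n (.inl μ)) (Subtype.ext ?_)
        show Con γP.1 (unitInterval.symm 0) = γP.1
        rw [unitInterval.symm_zero, Con_one]
    | inr qs =>
        show Phiraw x y qs.1 qs.2 0 = _
        unfold Phiraw
        rw [if_pos (tauS_zero qs.2), sigmaS_zero]
        rfl

lemma homPhi_one (γ₀ : PathsFromTo X y x) (z : PathsGlue X y x n) :
    homPhi x y n z 1 = gH x y n (fH γ₀ n z) := by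
  induction z using Quot.ind with
  | _ e =>
    cases e with
    | inl γP =>
        have hA : (fH γ₀ n) (Quot.mk _ (Sum.inl γP)) = mkH y x n (γ₀, SphereN.pt n) := rfl
        have hB : (gH x y n) (mkH y x n (γ₀, SphereN.pt n)) =
            Phiraw x y γ₀ (SphereN.pt n) 1 := rfl
        rw [hA, hB]
        show mkG x y n (Sum.inl ⟨Con γP.1 (unitInterval.symm 1), ConP_start γP _⟩) =
          Phiraw x y γ₀ (SphereN.pt n) 1
        unfold Phiraw
        rw [if_neg tauS_pt_one_ne]
        refine congrArg (fun μ => mkG x y n (.inl μ)) (Subtype.ext ?_)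
        show Con γP.1 (unitInterval.symm 1) = Con γ₀.1 (nuS (SphereN.pt n, 1))
        apply ContinuousMap.ext
        intro t
        rw [show nuS (SphereN.pt n, 1) = 0 by rw [nuS_pt, unitInterval.symm_one],
          unitInterval.symm_one, Con_zero_apply, Con_zero_apply, γP.2, γ₀.2.1]
    | inr qs =>
        have hA : (fH γ₀ n) (Quot.mk _ (Sum.inr qs)) = mkH y x n qs := rfl
        have hB : (gH x y n) (mkH y x n qs) = Phiraw x y qs.1 qs.2 1 := rfl
        rw [hA, hB]
        rfl

def homPsiPiece (γ₀ : PathsFromTo X y x) (n : ℕ)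
    (qs : PathsFromTo X y x × SphereN n) : C(unitInterval, HalfSmash (PathsFromTo X y x) n) where
  toFun := fun u => if tauS (qs.2, u) = 0 then mkH y x n (qs.1, sigmaS (qs.2, u))
      else mkH y x n (γ₀, SphereN.pt n)
  continuous_toFun := by
    apply Continuous.if
    · intro u hu
      obtain ⟨ht0, hsig⟩ := tauS_frontier (f := fun u => (qs.2, u))
        (continuous_const.prodMk continuous_id) u hu
      rw [hsig]
      exact mkH_glue qs.1 γ₀
    · exact continuous_mkH.comp (continuous_const.prodMk
        (sigmaS_cont.comp (continuous_const.prodMk continuous_id)))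
    · exact continuous_const

set_option maxHeartbeats 1000000 in
lemma continuous_homPsiPiece (γ₀ : PathsFromTo X y x) :
    Continuous (homPsiPiece γ₀ n) := by
  apply ContinuousMap.continuous_of_continuous_uncurry
  show Continuous fun p : (PathsFromTo X y x × SphereN n) × unitInterval =>
    if tauS (p.1.2, p.2) = 0 then mkH y x n (p.1.1, sigmaS (p.1.2, p.2))
      else mkH y x n (γ₀, SphereN.pt n)
  apply Continuous.if
  · intro p hp
    obtain ⟨ht0, hsig⟩ := tauS_frontier (f := fun p => (p.1.2, p.2))
      ((continuous_snd.comp continuous_fst).prodMk continuous_snd) p hp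
    rw [hsig]
    exact mkH_glue p.1.1 γ₀
  · exact continuous_mkH.comp ((continuous_fst.comp continuous_fst).prodMk
      (sigmaS_cont.comp ((continuous_snd.comp continuous_fst).prodMk continuous_snd)))
  · exact continuous_const

def homPsi (γ₀ : PathsFromTo X y x) (n : ℕ) :
    HalfSmash (PathsFromTo X y x) n → C(unitInterval, HalfSmash (PathsFromTo X y x) n) :=
  Quot.lift (homPsiPiece γ₀ n)
    (by
      rintro ⟨γ, s⟩ ⟨γ', s'⟩ (heq | ⟨h1, h2⟩)
      · rw [heq]
      · cases h1
        cases h2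
        apply ContinuousMap.ext
        intro u
        show (if tauS (SphereN.pt n, u) = 0 then mkH y x n (γ, sigmaS (SphereN.pt n, u))
            else mkH y x n (γ₀, SphereN.pt n)) =
          (if tauS (SphereN.pt n, u) = 0 then mkH y x n (γ', sigmaS (SphereN.pt n, u))
            else mkH y x n (γ₀, SphereN.pt n))
        by_cases hu : tauS (SphereN.pt n, u) = 0
        · rw [if_pos hu, if_pos hu, sigmaS_pt]
          exact mkH_glue γ γ'
        · rw [if_neg hu, if_neg hu])

lemma continuous_homPsi (γ₀ : PathsFromTo X y x) :
    Continuous (homPsi γ₀ n : HalfSmash (PathsFromTo X y x) n → _) :=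
  continuous_quot_lift _ (continuous_homPsiPiece γ₀)

lemma homPsi_zero (γ₀ : PathsFromTo X y x) (z : HalfSmash (PathsFromTo X y x) n) :
    homPsi γ₀ n z 0 = z := by
  induction z using Quot.ind with
  | _ qs =>
    show (if tauS (qs.2, 0) = 0 then mkH y x n (qs.1, sigmaS (qs.2, 0))
        else mkH y x n (γ₀, SphereN.pt n)) = _
    rw [if_pos (tauS_zero qs.2), sigmaS_zero]
    rfl

lemma homPsi_one (γ₀ : PathsFromTo X y x) (z : HalfSmash (PathsFromTo X y x) n) :
    homPsi γ₀ n z 1 = fH γ₀ n (gH x y n z) := by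
  induction z using Quot.ind with
  | _ qs =>
    have hB : (gH x y n) (Quot.mk _ qs) = Phiraw x y qs.1 qs.2 1 := rfl
    rw [hB]
    show (if tauS (qs.2, 1) = 0 then mkH y x n (qs.1, sigmaS (qs.2, 1))
        else mkH y x n (γ₀, SphereN.pt n)) = fH γ₀ n (Phiraw x y qs.1 qs.2 1)
    unfold Phiraw
    by_cases hu : tauS (qs.2, 1) = 0
    · rw [if_pos hu, if_pos hu]
      rfl
    · rw [if_neg hu, if_neg hu]
      rfl

/-- Homotopy equivalence 2: the glued path space and the half-smash. -/
noncomputable def equivGHalf (γ₀ : PathsFromTo X y x) (n : ℕ) :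
    ContinuousMap.HomotopyEquiv (PathsGlue X y x n) (HalfSmash (PathsFromTo X y x) n) where
  toFun := fH γ₀ n
  invFun := gH x y n
  left_inv := ⟨ContinuousMap.Homotopy.symm
    { toContinuousMap := ⟨fun p => homPhi x y n p.2 p.1,
        ContinuousEval.continuous_eval.comp
          ((continuous_homPhi.comp continuous_snd).prodMk continuous_fst)⟩
      map_zero_left := fun z => homPhi_zero z
      map_one_left := fun z => homPhi_one γ₀ z }⟩
  right_inv := ⟨ContinuousMap.Homotopy.symm
    { toContinuousMap := ⟨fun p => homPsi γ₀ n p.2 p.1,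
        ContinuousEval.continuous_eval.comp
          (((continuous_homPsi γ₀).comp continuous_snd).prodMk continuous_fst)⟩
      map_zero_left := fun z => homPsi_zero γ₀ z
      map_one_left := fun z => homPsi_one γ₀ z }⟩

end MainB
end IdDerivAux
/-- for a well-pointed path-connected space `(X, x)` and `y ∈ X`, the
homotopy fiber over `y` of the retraction `X ∨ₓ Sⁿ → X` is homotopy equivalent to
`P_y(X) ∪_{P_y^x(X)} (P_y^x(X) × Sⁿ)`, which in turn is homotopy equivalent to the
half-smash `Σⁿ (P_y^x(X)₊)`; consequently each space of the Goodwillie derivative of the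
identity functor is homotopy equivalent to the corresponding space of the suspension
spectrum `Σ^∞ P_y^x(X)₊`. -/
theorem identity_derivative (X : Type) [TopologicalSpace X] (x : X)
    (hwp : NondegBasepoint X x) (hpc : PathConnectedSpace X) (y : X) :
    ∀ n : ℕ,
      Nonempty (ContinuousMap.HomotopyEquiv
        (HoFib (wedgeSphereRetr X x n) y) (PathsGlue X y x n)) ∧
      Nonempty (ContinuousMap.HomotopyEquiv
        (PathsGlue X y x n) (HalfSmash (PathsFromTo X y x) n)) ∧
      Nonempty (ContinuousMap.HomotopyEquiv
        (HoFib (wedgeSphereRetr X x n) y) (HalfSmash (PathsFromTo X y x) n)) := by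
  intro n
  obtain ⟨d⟩ := IdDerivAux.ndr_of_nondeg hwp
  have hj : Joined y x := hpc.joined y x
  let p0 := hj.somePath
  let γ₀ : PathsFromTo X y x := ⟨p0.toContinuousMap, p0.source, p0.target⟩
  exact ⟨⟨IdDerivAux.equivHG d y n⟩, ⟨IdDerivAux.equivGHalf γ₀ n⟩,
    ⟨(IdDerivAux.equivHG d y n).trans (IdDerivAux.equivGHalf γ₀ n)⟩⟩
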